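/- Let A and B be 2N×2N complex matrices, let Π₊ = diag(1,0) and Π₋ = diag(0,1) be the 2N×2N block projections with N×N identity/zero blocks, and let U range over the matrices of the block-diagonal form U = diag(V, V̄) with V drawn from the normalized Haar measure on U(N). Then the average satisfies ⟨Tr(U*AUB)⟩ = (1/N)·Tr(Π₊A)·Tr(Π₊B) + (1/N)·Tr(Π₋A)·Tr(Π₋B). -/

import Mathlib

open MeasureTheory Matrix
open scoped ComplexConjugate

noncomputable instance (m n α : Type*) [MeasurableSpace α] : MeasurableSpace (Matrix m n α) :=
  (inferInstance : MeasurableSpace (m → n → α))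

/-- The `2N×2N` block-diagonal matrix `diag(V, V̄)` built from an `N×N` matrix `V`. -/
def Ublk {N : ℕ} (V : Matrix (Fin N) (Fin N) ℂ) :
    Matrix (Fin N ⊕ Fin N) (Fin N ⊕ Fin N) ℂ :=
  Matrix.fromBlocks V 0 0 Vᴴᵀ

/-- The `2N×2N` block projection `Π₊ = diag(1, 0)`. -/
def PiPlus (N : ℕ) : Matrix (Fin N ⊕ Fin N) (Fin N ⊕ Fin N) ℂ :=
  Matrix.fromBlocks 1 0 0 0

/-- The `2N×2N` block projection `Π₋ = diag(0, 1)`. -/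
def PiMinus (N : ℕ) : Matrix (Fin N ⊕ Fin N) (Fin N ⊕ Fin N) ℂ :=
  Matrix.fromBlocks 0 0 0 1

section Aux

variable {N : ℕ} {μ : Measure (Matrix (Fin N) (Fin N) ℂ)}

lemma meas_entry (a i : Fin N) :
    Measurable (fun V : Matrix (Fin N) (Fin N) ℂ => V a i) :=
  (measurable_pi_apply i).comp (measurable_pi_apply a)

lemma meas_conj_entry (a i : Fin N) :
    Measurable (fun V : Matrix (Fin N) (Fin N) ℂ => conj (V a i)) :=
  RCLike.continuous_conj.measurable.comp (meas_entry a i)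

lemma meas_mulleft (S : Matrix (Fin N) (Fin N) ℂ) :
    Measurable (fun V : Matrix (Fin N) (Fin N) ℂ => S * V) := by
  apply measurable_pi_lambda; intro a
  apply measurable_pi_lambda; intro i
  simp only [Matrix.mul_apply]
  exact Finset.measurable_sum _ fun k _ => ((meas_entry k i).const_mul (S a k))

lemma integrable_aux [IsProbabilityMeasure μ]
    (hmem : ∀ᵐ V ∂μ, V ∈ Matrix.unitaryGroup (Fin N) ℂ)
    (f : Matrix (Fin N) (Fin N) ℂ → ℂ) (hf : Measurable f)
    (hb : ∀ V ∈ Matrix.unitaryGroup (Fin N) ℂ, ‖f V‖ ≤ 1) :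
    Integrable f μ := by
  refine (integrable_const (1:ℝ)).mono' hf.aestronglyMeasurable ?_
  filter_upwards [hmem] with V hV
  simpa using hb V hV

lemma integrable_pair [IsProbabilityMeasure μ]
    (hmem : ∀ᵐ V ∂μ, V ∈ Matrix.unitaryGroup (Fin N) ℂ) (b j a i : Fin N) :
    Integrable (fun V : Matrix (Fin N) (Fin N) ℂ => V b j * conj (V a i)) μ := by
  apply integrable_aux hmem _ ((meas_entry b j).mul (meas_conj_entry a i))
  intro V hV
  show ‖V b j * conj (V a i)‖ ≤ 1
  rw [norm_mul, RCLike.norm_conj]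
  have h1 := entry_norm_bound_of_unitary hV b j
  have h2 := entry_norm_bound_of_unitary hV a i
  nlinarith [norm_nonneg (V b j), norm_nonneg (V a i)]

lemma integral_comp_mul [IsProbabilityMeasure μ]
    (hinv : ∀ S ∈ Matrix.unitaryGroup (Fin N) ℂ, μ.map (fun V => S * V) = μ)
    {S : Matrix (Fin N) (Fin N) ℂ} (hS : S ∈ Matrix.unitaryGroup (Fin N) ℂ)
    (f : Matrix (Fin N) (Fin N) ℂ → ℂ) (hf : Measurable f) :
    ∫ V, f (S * V) ∂μ = ∫ V, f V ∂μ := by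
  conv_rhs => rw [← hinv S hS]
  rw [integral_map (meas_mulleft S).aemeasurable]
  rw [hinv S hS]
  exact hf.aestronglyMeasurable

lemma diag_unitary (d : Fin N → ℂ) (hd : ∀ k, ‖d k‖ = 1) :
    Matrix.diagonal d ∈ Matrix.unitaryGroup (Fin N) ℂ := by
  rw [Matrix.mem_unitaryGroup_iff']
  have h1 : star (Matrix.diagonal d) = Matrix.diagonal (fun k => conj (d k)) := by
    simp [Matrix.star_eq_conjTranspose, Matrix.diagonal_conjTranspose]
  rw [h1, Matrix.diagonal_mul_diagonal]
  ext x y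
  by_cases h : x = y
  · subst h
    simp only [Matrix.diagonal_apply_eq, Matrix.one_apply_eq]
    rw [mul_comm, Complex.mul_conj]
    have : Complex.normSq (d x) = 1 := by
      have h := hd x
      have h2 : ‖d x‖ = 1 := h
      rw [← Complex.sq_norm, h2]; norm_num
    rw [this]; norm_num
  · simp [Matrix.diagonal_apply, Matrix.one_apply, h]

lemma perm_unitary (σ : Equiv.Perm (Fin N)) :
    σ.permMatrix ℂ ∈ Matrix.unitaryGroup (Fin N) ℂ := by
  rw [Matrix.mem_unitaryGroup_iff']
  have hstar : star (σ.permMatrix ℂ) = (σ⁻¹).permMatrix ℂ := by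
    ext x y
    simp only [Equiv.Perm.permMatrix]
    rw [Matrix.star_apply, PEquiv.toMatrix_apply, PEquiv.toMatrix_apply,
      Equiv.toPEquiv_apply, Equiv.toPEquiv_apply]
    simp only [Option.mem_def, Option.some.injEq]
    by_cases h : σ y = x
    · have h2 : σ⁻¹ x = y := by simp [← h]
      simp [h, h2]
    · have h2 : ¬ σ⁻¹ x = y := fun hh => h (by simp [← hh])
      simp [h, h2]; exact h2
  rw [hstar]
  show (σ⁻¹).toPEquiv.toMatrix * σ.toPEquiv.toMatrix = 1
  rw [PEquiv.toMatrix_toPEquiv_mul]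
  ext x y
  rw [Matrix.submatrix_apply, PEquiv.toMatrix_apply, Equiv.toPEquiv_apply, id]
  simp only [Option.mem_def, Option.some.injEq]
  by_cases h : x = y
  · simp [h, Matrix.one_apply]
  · have h2 : ¬ σ (σ⁻¹ x) = y := by simpa using h
    simp [h, h2, Matrix.one_apply]

variable [IsProbabilityMeasure μ]
  (hmem : ∀ᵐ V ∂μ, V ∈ Matrix.unitaryGroup (Fin N) ℂ)
  (hinv : ∀ S ∈ Matrix.unitaryGroup (Fin N) ℂ, μ.map (fun V => S * V) = μ)

include hinv in
lemma ent_offdiag {a b : Fin N} (hab : a ≠ b) (j i : Fin N) :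
    ∫ V, V b j * conj (V a i) ∂μ = 0 := by
  set d : Fin N → ℂ := fun k => if k = b then (-1:ℂ) else 1 with hd
  have hS : Matrix.diagonal d ∈ Matrix.unitaryGroup (Fin N) ℂ := by
    apply diag_unitary
    intro k; by_cases h : k = b <;> simp [hd, h]
  have key := integral_comp_mul hinv hS (fun V => V b j * conj (V a i))
    ((meas_entry b j).mul (meas_conj_entry a i))
  have h2 : ∀ V : Matrix (Fin N) (Fin N) ℂ,
      (Matrix.diagonal d * V) b j * conj ((Matrix.diagonal d * V) a i)
        = -(V b j * conj (V a i)) := by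
    intro V
    rw [Matrix.diagonal_mul, Matrix.diagonal_mul]
    simp [hd, hab]
  simp only [h2, integral_neg] at key
  linear_combination -key / 2

include hinv in
lemma ent_perm (σ : Equiv.Perm (Fin N)) (b j a i : Fin N) :
    ∫ V, V (σ b) j * conj (V (σ a) i) ∂μ = ∫ V, V b j * conj (V a i) ∂μ := by
  have key := integral_comp_mul hinv (perm_unitary σ) (fun V => V b j * conj (V a i))
    ((meas_entry b j).mul (meas_conj_entry a i))
  have h2 : ∀ V : Matrix (Fin N) (Fin N) ℂ,
      (σ.permMatrix ℂ * V) b j * conj ((σ.permMatrix ℂ * V) a i)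
        = V (σ b) j * conj (V (σ a) i) := by
    intro V
    have hSV : σ.permMatrix ℂ * V = V.submatrix σ id := PEquiv.toMatrix_toPEquiv_mul σ V
    rw [hSV]
    simp
  simp only [h2] at key
  exact key

include hmem in
lemma ent_sum (j i : Fin N) :
    ∑ b, ∫ V, V b j * conj (V b i) ∂μ = if i = j then 1 else 0 := by
  rw [← integral_finset_sum _ (fun b _ => integrable_pair hmem b j b i)]
  have : ∫ V, ∑ b, V b j * conj (V b i) ∂μ
      = ∫ (_ : Matrix (Fin N) (Fin N) ℂ), ((1 : Matrix (Fin N) (Fin N) ℂ) i j) ∂μ := by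
    apply integral_congr_ae
    filter_upwards [hmem] with V hV
    have h1 : star V * V = 1 := (Matrix.mem_unitaryGroup_iff').mp hV
    calc ∑ b, V b j * conj (V b i) = (star V * V) i j := by
          rw [Matrix.mul_apply]
          refine Finset.sum_congr rfl fun b _ => ?_
          rw [Matrix.star_apply, RCLike.star_def]
          ring
      _ = (1 : Matrix (Fin N) (Fin N) ℂ) i j := by rw [h1]
  rw [this, integral_const]
  simp [Matrix.one_apply]

include hmem hinv in
lemma ent_key (b j a i : Fin N) :
    ∫ V, V b j * conj (V a i) ∂μ
      = if a = b ∧ i = j then 1 / (N : ℂ) else 0 := by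
  by_cases hab : a = b
  · subst hab
    have hall : ∀ b' : Fin N, ∫ V, V b' j * conj (V b' i) ∂μ = ∫ V, V a j * conj (V a i) ∂μ := by
      intro b'
      have := ent_perm hinv (Equiv.swap a b') b' j b' i
      rw [Equiv.swap_apply_right] at this
      exact this.symm
    have hsum := ent_sum hmem j i
    rw [Finset.sum_congr rfl (fun b' _ => hall b')] at hsum
    rw [Finset.sum_const, Finset.card_univ, Fintype.card_fin] at hsum
    have hN : (N : ℂ) ≠ 0 := by
      have : 0 < N := Fin.pos a
      exact_mod_cast this.ne'
    rw [nsmul_eq_mul] at hsum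
    simp only [eq_self_iff_true, true_and]
    rcases eq_or_ne i j with h | h
    · simp only [if_pos h] at hsum ⊢
      field_simp
      linear_combination hsum
    · simp only [if_neg h] at hsum ⊢
      rcases mul_eq_zero.mp hsum with h' | h'
      · exact absurd h' hN
      · exact h'
  · rw [if_neg (fun hh => hab hh.1)]
    exact ent_offdiag hinv hab j i

include hinv in
lemma ent_zero (b j a i : Fin N) :
    ∫ V, V b j * V a i ∂μ = 0 := by
  set d : Fin N → ℂ := fun _ => Complex.I with hd
  have hS : Matrix.diagonal d ∈ Matrix.unitaryGroup (Fin N) ℂ :=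
    diag_unitary d (fun k => by simp [hd])
  have key := integral_comp_mul hinv hS (fun V => V b j * V a i)
    ((meas_entry b j).mul (meas_entry a i))
  have h2 : ∀ V : Matrix (Fin N) (Fin N) ℂ,
      (Matrix.diagonal d * V) b j * (Matrix.diagonal d * V) a i
        = -(V b j * V a i) := by
    intro V
    rw [Matrix.diagonal_mul, Matrix.diagonal_mul]
    simp [hd]
    ring_nf
    rw [Complex.I_sq]
    ring
  simp only [h2, integral_neg] at key
  linear_combination -key / 2

/-- The value of `∫ conj (Ublk V q p) * Ublk V r s`. -/
noncomputable def Uval (N : ℕ) :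
    (Fin N ⊕ Fin N) → (Fin N ⊕ Fin N) → (Fin N ⊕ Fin N) → (Fin N ⊕ Fin N) → ℂ
  | Sum.inl q, Sum.inl p, Sum.inl r, Sum.inl s => if q = r ∧ p = s then 1/(N:ℂ) else 0
  | Sum.inr q, Sum.inr p, Sum.inr r, Sum.inr s => if q = r ∧ p = s then 1/(N:ℂ) else 0
  | _, _, _, _ => 0

lemma meas_Ublk (q p : Fin N ⊕ Fin N) :
    Measurable (fun V : Matrix (Fin N) (Fin N) ℂ => Ublk V q p) := by
  rcases q with q | q <;> rcases p with p | p <;>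
    simp only [Ublk, Matrix.fromBlocks_apply₁₁, Matrix.fromBlocks_apply₁₂,
      Matrix.fromBlocks_apply₂₁, Matrix.fromBlocks_apply₂₂, Matrix.zero_apply,
      Matrix.conjTranspose_apply, Matrix.transpose_apply, RCLike.star_def]
  · exact meas_entry q p
  · exact measurable_const
  · exact measurable_const
  · exact meas_conj_entry q p

lemma bound_Ublk {V : Matrix (Fin N) (Fin N) ℂ}
    (hV : V ∈ Matrix.unitaryGroup (Fin N) ℂ) (q p : Fin N ⊕ Fin N) :
    ‖Ublk V q p‖ ≤ 1 := by
  rcases q with q | q <;> rcases p with p | p <;>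
    simp only [Ublk, Matrix.fromBlocks_apply₁₁, Matrix.fromBlocks_apply₁₂,
      Matrix.fromBlocks_apply₂₁, Matrix.fromBlocks_apply₂₂, Matrix.zero_apply,
      Matrix.conjTranspose_apply, Matrix.transpose_apply, norm_zero, norm_star]
  · exact entry_norm_bound_of_unitary hV q p
  · norm_num
  · norm_num
  · exact entry_norm_bound_of_unitary hV q p

include hmem in
lemma integrable_Upair (q p r s : Fin N ⊕ Fin N) :
    Integrable (fun V : Matrix (Fin N) (Fin N) ℂ => conj (Ublk V q p) * Ublk V r s) μ := by
  apply integrable_aux hmem _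
    ((RCLike.continuous_conj.measurable.comp (meas_Ublk q p)).mul (meas_Ublk r s))
  intro V hV
  show ‖conj (Ublk V q p) * Ublk V r s‖ ≤ 1
  rw [norm_mul, RCLike.norm_conj]
  have h1 := bound_Ublk hV q p
  have h2 := bound_Ublk hV r s
  nlinarith [norm_nonneg (Ublk V q p), norm_nonneg (Ublk V r s)]

include hmem hinv in
lemma Ukey (q p r s : Fin N ⊕ Fin N) :
    ∫ V, conj (Ublk V q p) * Ublk V r s ∂μ = Uval N q p r s := by
  rcases q with q | q <;> rcases p with p | p <;> rcases r with r | r <;> rcases s with s | s <;>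
    simp only [Ublk, Matrix.fromBlocks_apply₁₁, Matrix.fromBlocks_apply₁₂,
      Matrix.fromBlocks_apply₂₁, Matrix.fromBlocks_apply₂₂, Matrix.zero_apply,
      Matrix.conjTranspose_apply, Matrix.transpose_apply, RCLike.star_def, Uval,
      map_zero, zero_mul, mul_zero, integral_zero, RCLike.conj_conj]
  · -- inl inl inl inl
    rw [integral_congr_ae (Filter.Eventually.of_forall
      (fun V : Matrix (Fin N) (Fin N) ℂ => mul_comm (conj (V q p)) (V r s)))]
    exact ent_key hmem hinv r s q p
  · -- inl inl inr inr : conj * conj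
    have : ∀ V : Matrix (Fin N) (Fin N) ℂ,
        conj (V q p) * conj (V r s) = conj (V q p * V r s) := fun V =>
      (_root_.map_mul (starRingEnd ℂ) (V q p) (V r s)).symm
    simp only [this]
    rw [integral_conj, ent_zero hinv q p r s, map_zero]
  · -- inr inr inl inl : plain * plain
    exact ent_zero hinv q p r s
  · -- inr inr inr inr
    rw [ent_key hmem hinv q p r s]
    exact if_congr ⟨fun ⟨h1, h2⟩ => ⟨h1.symm, h2.symm⟩, fun ⟨h1, h2⟩ => ⟨h1.symm, h2.symm⟩⟩ rfl rfl

end Aux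

/-- For `2N×2N` complex matrices `A`, `B`, averaging `Tr(U*AUB)` over the matrices
`U = diag(V, V̄)` with `V` Haar-distributed on `U(N)` gives
`(1/N)·Tr(Π₊A)·Tr(Π₊B) + (1/N)·Tr(Π₋A)·Tr(Π₋B)`. -/
theorem blockdiag_unitary_second_moment (N : ℕ)
    (A B : Matrix (Fin N ⊕ Fin N) (Fin N ⊕ Fin N) ℂ)
    (μ : Measure (Matrix (Fin N) (Fin N) ℂ)) [IsProbabilityMeasure μ]
    (hmem : ∀ᵐ V ∂μ, V ∈ Matrix.unitaryGroup (Fin N) ℂ)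
    (hinv : ∀ S ∈ Matrix.unitaryGroup (Fin N) ℂ, μ.map (fun V => S * V) = μ) :
    ∫ V, ((Ublk V)ᴴ * A * Ublk V * B).trace ∂μ =
      (1 / (N : ℂ)) * ((PiPlus N * A).trace * (PiPlus N * B).trace) +
      (1 / (N : ℂ)) * ((PiMinus N * A).trace * (PiMinus N * B).trace) := by
  -- Step 1: pointwise expansion of the trace
  have h_tr : ∀ V : Matrix (Fin N) (Fin N) ℂ,
      ((Ublk V)ᴴ * A * Ublk V * B).trace
        = ∑ p, ∑ r, ∑ s, ∑ q, A q r * B s p * (conj (Ublk V q p) * Ublk V r s) := by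
    intro V
    simp only [Matrix.trace, Matrix.diag_apply, Matrix.mul_apply, Matrix.conjTranspose_apply,
      Finset.sum_mul, Finset.mul_sum, RCLike.star_def]
    refine Finset.sum_congr rfl fun p _ => ?_
    rw [Finset.sum_comm]
    refine Finset.sum_congr rfl fun r _ => ?_
    refine Finset.sum_congr rfl fun s _ => ?_
    refine Finset.sum_congr rfl fun q _ => ?_
    ring
  simp only [h_tr]
  -- Step 2: exchange integral and sums
  have hint : ∀ q p r s : Fin N ⊕ Fin N,
      Integrable (fun V : Matrix (Fin N) (Fin N) ℂ =>
        A q r * B s p * (conj (Ublk V q p) * Ublk V r s)) μ :=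
    fun q p r s => (integrable_Upair hmem q p r s).const_mul _
  rw [integral_finset_sum _ (fun p _ => integrable_finset_sum _ (fun r _ =>
    integrable_finset_sum _ (fun s _ => integrable_finset_sum _ (fun q _ => hint q p r s))))]
  have hswap : ∀ p : Fin N ⊕ Fin N,
      (∫ V, ∑ r, ∑ s, ∑ q, A q r * B s p * (conj (Ublk V q p) * Ublk V r s) ∂μ)
        = ∑ r, ∑ s, ∑ q, A q r * B s p * Uval N q p r s := by
    intro p
    rw [integral_finset_sum _ (fun r _ => integrable_finset_sum _ (fun s _ =>
      integrable_finset_sum _ (fun q _ => hint q p r s)))]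
    refine Finset.sum_congr rfl fun r _ => ?_
    rw [integral_finset_sum _ (fun s _ => integrable_finset_sum _ (fun q _ => hint q p r s))]
    refine Finset.sum_congr rfl fun s _ => ?_
    rw [integral_finset_sum _ (fun q _ => hint q p r s)]
    refine Finset.sum_congr rfl fun q _ => ?_
    rw [integral_const_mul, Ukey hmem hinv q p r s]
  simp only [hswap]
  -- Step 3: evaluate the remaining finite sum
  have htrA : (PiPlus N * A).trace = ∑ q : Fin N, A (Sum.inl q) (Sum.inl q) := by
    simp [PiPlus, Matrix.trace, Matrix.mul_apply, Fintype.sum_sum_type,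
      Matrix.one_apply, ite_mul, zero_mul]
  have htrB : (PiPlus N * B).trace = ∑ q : Fin N, B (Sum.inl q) (Sum.inl q) := by
    simp [PiPlus, Matrix.trace, Matrix.mul_apply, Fintype.sum_sum_type,
      Matrix.one_apply, ite_mul, zero_mul]
  have htrA' : (PiMinus N * A).trace = ∑ q : Fin N, A (Sum.inr q) (Sum.inr q) := by
    simp [PiMinus, Matrix.trace, Matrix.mul_apply, Fintype.sum_sum_type,
      Matrix.one_apply, ite_mul, zero_mul]
  have htrB' : (PiMinus N * B).trace = ∑ q : Fin N, B (Sum.inr q) (Sum.inr q) := by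
    simp [PiMinus, Matrix.trace, Matrix.mul_apply, Fintype.sum_sum_type,
      Matrix.one_apply, ite_mul, zero_mul]
  rw [htrA, htrB, htrA', htrB', Finset.mul_sum, Finset.mul_sum]
  simp only [Fintype.sum_sum_type, Uval, mul_zero, Finset.sum_const_zero, add_zero, zero_add,
    mul_ite, ite_and, Finset.sum_ite_eq, Finset.sum_ite_eq', Finset.mem_univ, if_true,
    Finset.sum_mul, Finset.mul_sum]
  ring_nf
  rw [add_comm]
  congr 1
  · exact Finset.sum_congr rfl fun x _ => Finset.sum_congr rfl fun y _ => by ring
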